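/- If V is a multiplicative unitary on a finite-dimensional Hilbert space H (i.e. V_{12}V_{13}V_{23} = V_{23}V_{12}), then the dimension of the space of fixed vectors of V equals the dimension of the space of cofixed vectors of V. -/

import Mathlib

open scoped InnerProductSpace ComplexOrder

noncomputable section

namespace MU

variable {ι : Type*} [Fintype ι] [DecidableEq ι]

/-- The elementary tensor `f ⊗ g` of two vectors, in the model
`H ⊗ H = EuclideanSpace ℂ (ι × ι)`. -/
def tens (f g : EuclideanSpace ℂ ι) : EuclideanSpace ℂ (ι × ι) :=
  WithLp.toLp 2 (fun p : ι × ι => f p.1 * g p.2)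

/-- `g ↦ f ⊗ g` as a linear map. -/
def tensL (f : EuclideanSpace ℂ ι) :
    EuclideanSpace ℂ ι →ₗ[ℂ] EuclideanSpace ℂ (ι × ι) where
  toFun g := tens f g
  map_add' x y := by
    ext p; simp only [tens, PiLp.add_apply]; ring
  map_smul' c x := by
    ext p; simp only [tens, PiLp.smul_apply, smul_eq_mul, RingHom.id_apply]; ring

/-- `f ↦ f ⊗ g` as a linear map. -/
def tensR (g : EuclideanSpace ℂ ι) :
    EuclideanSpace ℂ ι →ₗ[ℂ] EuclideanSpace ℂ (ι × ι) where
  toFun f := tens f g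
  map_add' x y := by
    ext p; simp only [tens, PiLp.add_apply]; ring
  map_smul' c x := by
    ext p; simp only [tens, PiLp.smul_apply, smul_eq_mul, RingHom.id_apply]; ring

/-- Action of a matrix on a Euclidean space vector. -/
def appM {κ : Type*} [Fintype κ] (M : Matrix κ κ ℂ) (v : EuclideanSpace ℂ κ) :
    EuclideanSpace ℂ κ :=
  WithLp.toLp 2 (fun i => ∑ j, M i j * v j)

/-- Action of a matrix as a linear map on the Euclidean space. -/
def mact {κ : Type*} [Fintype κ] (M : Matrix κ κ ℂ) :
    EuclideanSpace ℂ κ →ₗ[ℂ] EuclideanSpace ℂ κ where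
  toFun := appM M
  map_add' x y := by
    ext i; simp only [appM, PiLp.add_apply, mul_add, Finset.sum_add_distrib]
  map_smul' c x := by
    ext i; simp only [appM, PiLp.smul_apply, smul_eq_mul, RingHom.id_apply, Finset.mul_sum]
    refine Finset.sum_congr rfl fun j _ => ?_
    ring

/-- The leg `V₁₂` on `H ⊗ H ⊗ H`. -/
def leg12 (V : Matrix (ι × ι) (ι × ι) ℂ) : Matrix (ι × ι × ι) (ι × ι × ι) ℂ :=
  fun p q => V (p.1, p.2.1) (q.1, q.2.1) * (if p.2.2 = q.2.2 then 1 else 0)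

/-- The leg `V₁₃` on `H ⊗ H ⊗ H`. -/
def leg13 (V : Matrix (ι × ι) (ι × ι) ℂ) : Matrix (ι × ι × ι) (ι × ι × ι) ℂ :=
  fun p q => V (p.1, p.2.2) (q.1, q.2.2) * (if p.2.1 = q.2.1 then 1 else 0)

/-- The leg `V₂₃` on `H ⊗ H ⊗ H`. -/
def leg23 (V : Matrix (ι × ι) (ι × ι) ℂ) : Matrix (ι × ι × ι) (ι × ι × ι) ℂ :=
  fun p q => V (p.2.1, p.2.2) (q.2.1, q.2.2) * (if p.1 = q.1 then 1 else 0)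

/-- The pentagon equation `V₁₂ V₁₃ V₂₃ = V₂₃ V₁₂`. -/
def Pentagon (V : Matrix (ι × ι) (ι × ι) ℂ) : Prop :=
  leg12 V * leg13 V * leg23 V = leg23 V * leg12 V

/-- `V` is a multiplicative unitary: a unitary satisfying the pentagon equation. -/
def IsMU (V : Matrix (ι × ι) (ι × ι) ℂ) : Prop :=
  V * V.conjTranspose = 1 ∧ V.conjTranspose * V = 1 ∧ Pentagon V

/-- `ξ` is a fixed vector for `V`. -/
def Fixed (V : Matrix (ι × ι) (ι × ι) ℂ) (ξ : EuclideanSpace ℂ ι) : Prop :=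
  ∀ η, mact V (tens ξ η) = tens ξ η

/-- `ξ` is a cofixed vector for `V`. -/
def Cofixed (V : Matrix (ι × ι) (ι × ι) ℂ) (ξ : EuclideanSpace ℂ ι) : Prop :=
  ∀ η, mact V (tens η ξ) = tens η ξ

/-- `V` has multiplicity 1, with fixed unit vector `e` and cofixed unit vector `eHat`. -/
def Mult1 (V : Matrix (ι × ι) (ι × ι) ℂ) (e eHat : EuclideanSpace ℂ ι) : Prop :=
  ‖e‖ = 1 ∧ ‖eHat‖ = 1 ∧ Fixed V e ∧ Cofixed V eHat ∧
    (∀ ξ, Fixed V ξ → ∃ c : ℂ, ξ = c • e) ∧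
    (∀ ξ, Cofixed V ξ → ∃ c : ℂ, ξ = c • eHat)

/-- A pre-subgroup of `V` (with fixed vector `e`): a unit vector `f` with
`⟨f,e⟩ > 0` and `V(f⊗f) = f⊗f`. -/
def IsPreSubgroup (V : Matrix (ι × ι) (ι × ι) ℂ) (e f : EuclideanSpace ℂ ι) : Prop :=
  ‖f‖ = 1 ∧ 0 < ⟪f, e⟫_ℂ ∧ mact V (tens f f) = tens f f

/-- The subspace `H^f = {η : V(f⊗η) = f⊗η}`. -/
def subUp (V : Matrix (ι × ι) (ι × ι) ℂ) (f : EuclideanSpace ℂ ι) :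
    Submodule ℂ (EuclideanSpace ℂ ι) :=
  LinearMap.ker ((mact V).comp (tensL f) - tensL f)

/-- The subspace `H_f = {η : V(η⊗f) = η⊗f}`. -/
def subDown (V : Matrix (ι × ι) (ι × ι) ℂ) (f : EuclideanSpace ℂ ι) :
    Submodule ℂ (EuclideanSpace ℂ ι) :=
  LinearMap.ker ((mact V).comp (tensR f) - tensR f)

/-- The slice `L(ω_{ξ,η}) = (ω_{ξ,η} ⊗ id)(V)`. -/
def Lslice (V : Matrix (ι × ι) (ι × ι) ℂ) (ξ η : EuclideanSpace ℂ ι) : Matrix ι ι ℂ :=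
  fun a b => ∑ x, ∑ y, (starRingEnd ℂ) (ξ x) * η y * V (x, a) (y, b)

/-- The slice `ρ(ω_{ξ,η}) = (id ⊗ ω_{ξ,η})(V)`. -/
def Rslice (V : Matrix (ι × ι) (ι × ι) ℂ) (ξ η : EuclideanSpace ℂ ι) : Matrix ι ι ℂ :=
  fun a b => ∑ x, ∑ y, (starRingEnd ℂ) (ξ x) * η y * V (a, x) (b, y)

/-- The slice `L(ω) = (ω ⊗ id)(V)` of a general linear functional `ω` on `L(H)`. -/
def LslF (V : Matrix (ι × ι) (ι × ι) ℂ) (ω : Matrix ι ι ℂ →ₗ[ℂ] ℂ) : Matrix ι ι ℂ :=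
  fun a b => ω (fun x y => V (x, a) (y, b))

/-- A state on `L(H)`: a unital positive linear functional. -/
def IsState (ω : Matrix ι ι ℂ →ₗ[ℂ] ℂ) : Prop :=
  ω 1 = 1 ∧ ∀ M : Matrix ι ι ℂ, M.PosSemidef → ∃ r : ℝ, 0 ≤ r ∧ ω M = r


section Aux
set_option linter.unusedSectionVars false

variable {κ : Type*} [Fintype κ] [DecidableEq κ]

lemma mact_apply (M : Matrix κ κ ℂ) (v : EuclideanSpace ℂ κ) (i : κ) :
    mact M v i = ∑ j, M i j * v j := rfl

lemma mact_eq_toEuclideanLin (M : Matrix κ κ ℂ) :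
    mact M = Matrix.toEuclideanLin M := rfl

lemma mact_mul_apply (M N : Matrix κ κ ℂ) (v : EuclideanSpace ℂ κ) :
    mact (M * N) v = mact M (mact N v) := by
  ext i
  simp only [mact_apply, Matrix.mul_apply, Finset.sum_mul, Finset.mul_sum, mul_assoc]
  exact Finset.sum_comm

lemma mact_one_apply (v : EuclideanSpace ℂ κ) : mact (1 : Matrix κ κ ℂ) v = v := by
  ext i
  simp [mact_apply, Matrix.one_apply, ite_mul]

lemma mact_smul_apply (c : ℂ) (M : Matrix κ κ ℂ) (v : EuclideanSpace ℂ κ) :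
    mact (c • M) v = c • mact M v := by
  ext i
  simp [mact_apply, Matrix.smul_apply, Finset.mul_sum, mul_assoc, PiLp.smul_apply,
    smul_eq_mul]

lemma inner_mact_mact (M : Matrix κ κ ℂ) (hM : M.conjTranspose * M = 1)
    (x y : EuclideanSpace ℂ κ) : ⟪mact M x, mact M y⟫_ℂ = ⟪x, y⟫_ℂ := by
  have h1 : ⟪mact M x, mact M y⟫_ℂ
      = ⟪x, LinearMap.adjoint (Matrix.toEuclideanLin M) (mact M y)⟫_ℂ := by
    rw [LinearMap.adjoint_inner_right, mact_eq_toEuclideanLin]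
  rw [h1, ← Matrix.toEuclideanLin_conjTranspose_eq_adjoint, ← mact_eq_toEuclideanLin,
    ← mact_mul_apply, hM, mact_one_apply]

lemma norm_mact (M : Matrix κ κ ℂ) (hM : M.conjTranspose * M = 1)
    (x : EuclideanSpace ℂ κ) : ‖mact M x‖ = ‖x‖ := by
  have h : ‖mact M x‖ ^ 2 = ‖x‖ ^ 2 := by
    rw [← inner_self_eq_norm_sq (𝕜 := ℂ), ← inner_self_eq_norm_sq (𝕜 := ℂ),
      inner_mact_mact M hM]
  exact (pow_left_inj₀ (norm_nonneg _) (norm_nonneg _) two_ne_zero).mp h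

lemma trace_mact (M : Matrix κ κ ℂ) :
    LinearMap.trace ℂ (EuclideanSpace ℂ κ) (mact M) = M.trace := by
  rw [mact_eq_toEuclideanLin, Matrix.toEuclideanLin_eq_toLin_orthonormal,
    LinearMap.trace_eq_matrix_trace ℂ (EuclideanSpace.basisFun κ ℂ).toBasis,
    LinearMap.toMatrix_toLin]

end Aux

section Mats
set_option linter.unusedSectionVars false

variable (V : Matrix (ι × ι) (ι × ι) ℂ)

/-- `(id ⊗ Tr)(V)` (unnormalized). -/
def Amat : Matrix ι ι ℂ := fun a c => ∑ y, V (a, y) (c, y)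

/-- `(Tr ⊗ id)(V)` (unnormalized). -/
def Bmat : Matrix ι ι ℂ := fun b d => ∑ x, V (x, b) (x, d)

/-- partial trace over legs 2,3 -/
def ptrA (X : Matrix (ι × ι × ι) (ι × ι × ι) ℂ) : Matrix ι ι ℂ :=
  fun i l => ∑ j, ∑ k, X (i, j, k) (l, j, k)

/-- partial trace over legs 1,2 -/
def ptrB (X : Matrix (ι × ι × ι) (ι × ι × ι) ℂ) : Matrix ι ι ℂ :=
  fun k n => ∑ i, ∑ j, X (i, j, k) (i, j, n)

lemma leg23_mul (M N : Matrix (ι × ι) (ι × ι) ℂ) :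
    leg23 (M * N) = leg23 M * leg23 N := by
  ext ⟨i, j, k⟩ ⟨l, m, n⟩
  simp only [leg23, Matrix.mul_apply, Fintype.sum_prod_type, mul_ite, ite_mul, mul_one,
    mul_zero, one_mul, zero_mul, Finset.sum_ite_irrel, Finset.sum_const_zero,
    Finset.sum_ite_eq, Finset.sum_ite_eq', Finset.mem_univ, if_true, Finset.sum_mul]

lemma leg12_mul (M N : Matrix (ι × ι) (ι × ι) ℂ) :
    leg12 (M * N) = leg12 M * leg12 N := by
  ext ⟨i, j, k⟩ ⟨l, m, n⟩
  simp only [leg12, Matrix.mul_apply, Fintype.sum_prod_type, mul_ite, ite_mul, mul_one,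
    mul_zero, one_mul, zero_mul, Finset.sum_ite_irrel, Finset.sum_const_zero,
    Finset.sum_ite_eq, Finset.sum_ite_eq', Finset.mem_univ, if_true, Finset.sum_mul]

lemma leg23_conjTranspose (M : Matrix (ι × ι) (ι × ι) ℂ) :
    (leg23 M).conjTranspose = leg23 M.conjTranspose := by
  ext ⟨i, j, k⟩ ⟨l, m, n⟩
  simp [leg23, Matrix.conjTranspose_apply, apply_ite (starRingEnd ℂ), eq_comm]

lemma leg12_conjTranspose (M : Matrix (ι × ι) (ι × ι) ℂ) :
    (leg12 M).conjTranspose = leg12 M.conjTranspose := by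
  ext ⟨i, j, k⟩ ⟨l, m, n⟩
  simp [leg12, Matrix.conjTranspose_apply, apply_ite (starRingEnd ℂ), eq_comm]

lemma leg23_one : leg23 (1 : Matrix (ι × ι) (ι × ι) ℂ) = 1 := by
  ext ⟨i, j, k⟩ ⟨l, m, n⟩
  simp only [leg23, Matrix.one_apply, Prod.mk.injEq, Prod.ext_iff]
  by_cases h1 : i = l <;> by_cases h2 : j = m <;> by_cases h3 : k = n <;>
    simp [h1, h2, h3]

lemma leg12_one : leg12 (1 : Matrix (ι × ι) (ι × ι) ℂ) = 1 := by
  ext ⟨i, j, k⟩ ⟨l, m, n⟩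
  simp only [leg12, Matrix.one_apply, Prod.mk.injEq, Prod.ext_iff]
  by_cases h1 : i = l <;> by_cases h2 : j = m <;> by_cases h3 : k = n <;>
    simp [h1, h2, h3]

lemma sum4_comm {α β : Type*} [Fintype α] [Fintype β] (F : α → α → β → β → ℂ) :
    ∑ a, ∑ b, ∑ c, ∑ d, F a b c d = ∑ c, ∑ d, ∑ a, ∑ b, F a b c d := by
  have h1 : ∑ p : α × α, ∑ q : β × β, F p.1 p.2 q.1 q.2
      = ∑ a, ∑ b, ∑ c, ∑ d, F a b c d := by
    simp [Fintype.sum_prod_type]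
  have h2 : ∑ q : β × β, ∑ p : α × α, F p.1 p.2 q.1 q.2
      = ∑ c, ∑ d, ∑ a, ∑ b, F a b c d := by
    simp [Fintype.sum_prod_type]
  rw [← h1, ← h2, Finset.sum_comm]

lemma sum3_rot {α : Type*} [Fintype α] (F : α → α → α → ℂ) :
    ∑ a, ∑ b, ∑ c, F a b c = ∑ c, ∑ b, ∑ a, F a b c := by
  calc ∑ a, ∑ b, ∑ c, F a b c
      = ∑ a, ∑ c, ∑ b, F a b c := Finset.sum_congr rfl fun a _ => Finset.sum_comm
    _ = ∑ c, ∑ a, ∑ b, F a b c := Finset.sum_comm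
    _ = ∑ c, ∑ b, ∑ a, F a b c := Finset.sum_congr rfl fun c _ => Finset.sum_comm

lemma ptrA_leg23_comm (M : Matrix (ι × ι) (ι × ι) ℂ)
    (X : Matrix (ι × ι × ι) (ι × ι × ι) ℂ) :
    ptrA (leg23 M * X) = ptrA (X * leg23 M) := by
  ext i l
  simp only [ptrA, leg23, Matrix.mul_apply, Fintype.sum_prod_type, mul_ite, ite_mul,
    mul_one, mul_zero, one_mul, zero_mul, Finset.sum_ite_irrel, Finset.sum_const_zero,
    Finset.sum_ite_eq, Finset.sum_ite_eq', Finset.mem_univ, if_true, Finset.sum_mul, Finset.mul_sum]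
  rw [sum4_comm]
  exact Finset.sum_congr rfl fun _ _ => Finset.sum_congr rfl fun _ _ =>
    Finset.sum_congr rfl fun _ _ => Finset.sum_congr rfl fun _ _ => mul_comm _ _

lemma ptrB_leg12_comm (M : Matrix (ι × ι) (ι × ι) ℂ)
    (X : Matrix (ι × ι × ι) (ι × ι × ι) ℂ) :
    ptrB (leg12 M * X) = ptrB (X * leg12 M) := by
  ext k n
  simp only [ptrB, leg12, Matrix.mul_apply, Fintype.sum_prod_type, mul_ite, ite_mul,
    mul_one, mul_zero, one_mul, zero_mul, Finset.sum_ite_irrel, Finset.sum_const_zero,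
    Finset.sum_ite_eq, Finset.sum_ite_eq', Finset.mem_univ, if_true, Finset.sum_mul, Finset.mul_sum]
  rw [sum4_comm]
  exact Finset.sum_congr rfl fun _ _ => Finset.sum_congr rfl fun _ _ =>
    Finset.sum_congr rfl fun _ _ => Finset.sum_congr rfl fun _ _ => mul_comm _ _

lemma ptrA_mul_12_13 : ptrA (leg12 V * leg13 V) = Amat V * Amat V := by
  ext i l
  simp only [ptrA, leg12, leg13, Amat, Matrix.mul_apply, Fintype.sum_prod_type, mul_ite,
    ite_mul, mul_one, mul_zero, one_mul, zero_mul, Finset.sum_ite_irrel,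
    Finset.sum_const_zero, Finset.sum_ite_eq, Finset.sum_ite_eq', Finset.mem_univ,
    if_true, Finset.sum_mul, Finset.mul_sum]
  exact sum3_rot _

lemma ptrA_leg12 : ptrA (leg12 V) = (Fintype.card ι : ℂ) • Amat V := by
  ext i l
  simp [ptrA, leg12, Amat, Finset.sum_const, Finset.card_univ, nsmul_eq_mul, Finset.mul_sum]

lemma ptrB_mul_13_23 : ptrB (leg13 V * leg23 V) = Bmat V * Bmat V := by
  ext k n
  simp only [ptrB, leg13, leg23, Bmat, Matrix.mul_apply, Fintype.sum_prod_type, mul_ite,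
    ite_mul, mul_one, mul_zero, one_mul, zero_mul, Finset.sum_ite_irrel,
    Finset.sum_const_zero, Finset.sum_ite_eq, Finset.sum_ite_eq', Finset.mem_univ,
    if_true, Finset.sum_mul, Finset.mul_sum]
  exact sum3_rot _

lemma ptrB_leg23 : ptrB (leg23 V) = (Fintype.card ι : ℂ) • Bmat V := by
  ext k n
  simp [ptrB, leg23, Bmat, Finset.sum_const, Finset.card_univ, nsmul_eq_mul, Finset.mul_sum]

lemma Amat_idem (hV : IsMU V) :
    Amat V * Amat V = (Fintype.card ι : ℂ) • Amat V := by
  obtain ⟨h1, h2, hp⟩ := hV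
  have e23 : leg23 V * (leg23 V).conjTranspose = 1 := by
    rw [leg23_conjTranspose, ← leg23_mul, h1, leg23_one]
  have e23' : (leg23 V).conjTranspose * leg23 V = 1 := by
    rw [leg23_conjTranspose, ← leg23_mul, h2, leg23_one]
  have key : leg12 V * leg13 V = leg23 V * (leg12 V * (leg23 V).conjTranspose) := by
    calc leg12 V * leg13 V = leg12 V * leg13 V * (leg23 V * (leg23 V).conjTranspose) := by
          rw [e23, mul_one]
      _ = (leg12 V * leg13 V * leg23 V) * (leg23 V).conjTranspose := by simp only [mul_assoc]
      _ = leg23 V * leg12 V * (leg23 V).conjTranspose := by rw [hp]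
      _ = leg23 V * (leg12 V * (leg23 V).conjTranspose) := by simp only [mul_assoc]
  calc Amat V * Amat V = ptrA (leg12 V * leg13 V) := (ptrA_mul_12_13 V).symm
    _ = ptrA (leg23 V * (leg12 V * (leg23 V).conjTranspose)) := by rw [key]
    _ = ptrA ((leg12 V * (leg23 V).conjTranspose) * leg23 V) := ptrA_leg23_comm _ _
    _ = ptrA (leg12 V * ((leg23 V).conjTranspose * leg23 V)) := by rw [mul_assoc]
    _ = ptrA (leg12 V) := by rw [e23', mul_one]
    _ = (Fintype.card ι : ℂ) • Amat V := ptrA_leg12 V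

lemma Bmat_idem (hV : IsMU V) :
    Bmat V * Bmat V = (Fintype.card ι : ℂ) • Bmat V := by
  obtain ⟨h1, h2, hp⟩ := hV
  have e12 : leg12 V * (leg12 V).conjTranspose = 1 := by
    rw [leg12_conjTranspose, ← leg12_mul, h1, leg12_one]
  have e12' : (leg12 V).conjTranspose * leg12 V = 1 := by
    rw [leg12_conjTranspose, ← leg12_mul, h2, leg12_one]
  have key : leg13 V * leg23 V = (leg12 V).conjTranspose * (leg23 V * leg12 V) := by
    calc leg13 V * leg23 V = ((leg12 V).conjTranspose * leg12 V) * (leg13 V * leg23 V) := by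
          rw [e12', one_mul]
      _ = (leg12 V).conjTranspose * (leg12 V * leg13 V * leg23 V) := by simp only [mul_assoc]
      _ = (leg12 V).conjTranspose * (leg23 V * leg12 V) := by rw [hp]
  calc Bmat V * Bmat V = ptrB (leg13 V * leg23 V) := (ptrB_mul_13_23 V).symm
    _ = ptrB ((leg12 V).conjTranspose * (leg23 V * leg12 V)) := by rw [key]
    _ = ptrB ((leg23 V * leg12 V) * (leg12 V).conjTranspose) := by
          rw [leg12_conjTranspose]
          exact ptrB_leg12_comm _ _
    _ = ptrB (leg23 V * (leg12 V * (leg12 V).conjTranspose)) := by rw [mul_assoc]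
    _ = ptrB (leg23 V) := by rw [e12, mul_one]
    _ = (Fintype.card ι : ℂ) • Bmat V := ptrB_leg23 V

lemma trace_Amat : (Amat V).trace = V.trace := by
  simp [Matrix.trace, Matrix.diag, Amat, Fintype.sum_prod_type]

lemma trace_Bmat : (Bmat V).trace = V.trace := by
  simp only [Matrix.trace, Matrix.diag, Bmat, Fintype.sum_prod_type]
  exact Finset.sum_comm

end Mats

section Fix
set_option linter.unusedSectionVars false

variable (V : Matrix (ι × ι) (ι × ι) ℂ)

lemma mact_tens_apply (ξ η : EuclideanSpace ℂ ι) (a b : ι) :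
    mact V (tens ξ η) (a, b) = ∑ c, ∑ d, V (a, b) (c, d) * (ξ c * η d) := by
  rw [mact_apply, Fintype.sum_prod_type]; rfl

lemma mact_tens_single (ξ : EuclideanSpace ℂ ι) (y a b : ι) :
    mact V (tens ξ (EuclideanSpace.single y (1:ℂ))) (a, b)
      = ∑ c, V (a, b) (c, y) * ξ c := by
  rw [mact_tens_apply]
  simp [EuclideanSpace.single_apply, mul_ite, Finset.sum_ite_eq', Finset.mem_univ]

lemma fixed_eigen (ξ : EuclideanSpace ℂ ι)
    (h : ∀ η, mact V (tens ξ η) = tens ξ η) :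
    mact (Amat V) ξ = (Fintype.card ι : ℂ) • ξ := by
  ext a
  have key : ∀ y, ∑ c, V (a, y) (c, y) * ξ c = ξ a := by
    intro y
    have h1 := congrFun (congrArg WithLp.ofLp (h (EuclideanSpace.single y 1))) (a, y)
    rw [mact_tens_single] at h1
    simpa [tens, EuclideanSpace.single_apply] using h1
  show ∑ c, Amat V a c * ξ c = ((Fintype.card ι : ℂ) • ξ) a
  calc ∑ c, Amat V a c * ξ c = ∑ c, ∑ y, V (a, y) (c, y) * ξ c := by
        simp [Amat, Finset.sum_mul]
    _ = ∑ y, ∑ c, V (a, y) (c, y) * ξ c := Finset.sum_comm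
    _ = ∑ _y : ι, ξ a := Finset.sum_congr rfl fun y _ => key y
    _ = (Fintype.card ι : ℂ) * ξ a := by
        simp [Finset.sum_const, nsmul_eq_mul]
    _ = ((Fintype.card ι : ℂ) • ξ) a := by simp [PiLp.smul_apply]

lemma eigen_fixed (h2 : V.conjTranspose * V = 1) (ξ : EuclideanSpace ℂ ι)
    (h : mact (Amat V) ξ = (Fintype.card ι : ℂ) • ξ) :
    ∀ η, mact V (tens ξ η) = tens ξ η := by
  have hA : ∀ a, ∑ y, ∑ c, V (a, y) (c, y) * ξ c = (Fintype.card ι : ℂ) * ξ a := by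
    intro a
    have h1 := congrFun (congrArg WithLp.ofLp h) a
    simp only [mact_apply, Amat, PiLp.smul_apply, smul_eq_mul] at h1
    rw [← h1, Finset.sum_comm]
    exact Finset.sum_congr rfl fun c _ => (Finset.sum_mul _ _ _).symm
  -- inner products with u y := ξ ⊗ e_y
  have huu : ∀ y, ⟪(tens ξ (EuclideanSpace.single y (1:ℂ)) : EuclideanSpace ℂ (ι × ι)),
      tens ξ (EuclideanSpace.single y 1)⟫_ℂ = ⟪ξ, ξ⟫_ℂ := by
    intro y
    simp only [PiLp.inner_apply]
    simp [PiLp.inner_apply, RCLike.inner_apply, tens, EuclideanSpace.single_apply,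
      Fintype.sum_prod_type, apply_ite (starRingEnd ℂ), mul_ite, ite_mul,
      Finset.sum_ite_eq, Finset.sum_ite_eq', Finset.mem_univ]
    refine Finset.sum_congr rfl fun a _ => ?_
    rw [Finset.sum_eq_single y (fun b _ hb => by simp [hb]) (by simp)]
    simp
  have e1 : ∀ y, ⟪(tens ξ (EuclideanSpace.single y (1:ℂ)) : EuclideanSpace ℂ (ι × ι)),
      mact V (tens ξ (EuclideanSpace.single y 1))⟫_ℂ
      = ∑ a, (starRingEnd ℂ) (ξ a) * ∑ c, V (a, y) (c, y) * ξ c := by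
    intro y
    simp only [PiLp.inner_apply, RCLike.inner_apply, Fintype.sum_prod_type,
      mact_tens_single]
    refine Finset.sum_congr rfl fun a _ => ?_
    simp [tens, EuclideanSpace.single_apply, apply_ite (starRingEnd ℂ), ite_mul,
      Finset.sum_ite_eq, Finset.sum_ite_eq', Finset.mem_univ]
    ring
  have hsum : ∑ y, ⟪(tens ξ (EuclideanSpace.single y (1:ℂ)) : EuclideanSpace ℂ (ι × ι)),
      mact V (tens ξ (EuclideanSpace.single y 1))⟫_ℂ
      = (Fintype.card ι : ℂ) * ⟪ξ, ξ⟫_ℂ := by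
    rw [Finset.sum_congr rfl fun y _ => e1 y, Finset.sum_comm]
    calc ∑ a, ∑ y, (starRingEnd ℂ) (ξ a) * ∑ c, V (a, y) (c, y) * ξ c
        = ∑ a, (starRingEnd ℂ) (ξ a) * ((Fintype.card ι : ℂ) * ξ a) := by
          refine Finset.sum_congr rfl fun a _ => ?_
          rw [← Finset.mul_sum, hA a]
      _ = (Fintype.card ι : ℂ) * ⟪ξ, ξ⟫_ℂ := by
          simp only [PiLp.inner_apply, RCLike.inner_apply, Finset.mul_sum]
          exact Finset.sum_congr rfl fun a _ => by ring
  -- Cauchy–Schwarz forces each single to be fixed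
  have key : ∀ y, mact V (tens ξ (EuclideanSpace.single y (1:ℂ)))
      = tens ξ (EuclideanSpace.single y 1) := by
    have hre_le : ∀ y, (⟪(tens ξ (EuclideanSpace.single y (1:ℂ)) : EuclideanSpace ℂ (ι × ι)),
        mact V (tens ξ (EuclideanSpace.single y 1))⟫_ℂ).re ≤ (⟪ξ, ξ⟫_ℂ).re := by
      intro y
      have cs := re_inner_le_norm (𝕜 := ℂ)
        (tens ξ (EuclideanSpace.single y (1:ℂ)) : EuclideanSpace ℂ (ι × ι))
        (mact V (tens ξ (EuclideanSpace.single y 1)))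
      rw [norm_mact V h2] at cs
      calc (⟪(tens ξ (EuclideanSpace.single y (1:ℂ)) : EuclideanSpace ℂ (ι × ι)),
          mact V (tens ξ (EuclideanSpace.single y 1))⟫_ℂ).re
          ≤ ‖(tens ξ (EuclideanSpace.single y (1:ℂ)) : EuclideanSpace ℂ (ι × ι))‖ ^ 2 := by
            rw [sq]; exact cs
        _ = (⟪(tens ξ (EuclideanSpace.single y (1:ℂ)) : EuclideanSpace ℂ (ι × ι)),
            tens ξ (EuclideanSpace.single y 1)⟫_ℂ).re := by
            rw [← inner_self_eq_norm_sq (𝕜 := ℂ)]; rfl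
        _ = (⟪ξ, ξ⟫_ℂ).re := by rw [huu y]
    have hre_eq : ∀ y, (⟪(tens ξ (EuclideanSpace.single y (1:ℂ)) : EuclideanSpace ℂ (ι × ι)),
        mact V (tens ξ (EuclideanSpace.single y 1))⟫_ℂ).re = (⟪ξ, ξ⟫_ℂ).re := by
      have hsre : ∑ y, (⟪(tens ξ (EuclideanSpace.single y (1:ℂ)) : EuclideanSpace ℂ (ι × ι)),
          mact V (tens ξ (EuclideanSpace.single y 1))⟫_ℂ).re
          = ∑ _y : ι, (⟪ξ, ξ⟫_ℂ).re := by
        rw [← Complex.re_sum, hsum]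
        simp [Finset.sum_const, nsmul_eq_mul, Complex.ofReal_natCast]
      intro y
      exact (Finset.sum_eq_sum_iff_of_le fun i _ => hre_le i).mp hsre y
        (Finset.mem_univ y)
    intro y
    have hnorm : ‖mact V (tens ξ (EuclideanSpace.single y (1:ℂ)))
        - tens ξ (EuclideanSpace.single y 1)‖ ^ 2 = 0 := by
      rw [norm_sub_sq (𝕜 := ℂ), norm_mact V h2]
      have h5 : ‖(tens ξ (EuclideanSpace.single y (1:ℂ)) : EuclideanSpace ℂ (ι × ι))‖ ^ 2
          = (⟪ξ, ξ⟫_ℂ).re := by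
        rw [← inner_self_eq_norm_sq (𝕜 := ℂ), huu y]; rfl
      have h6 : RCLike.re ⟪mact V (tens ξ (EuclideanSpace.single y (1:ℂ))),
          (tens ξ (EuclideanSpace.single y 1) : EuclideanSpace ℂ (ι × ι))⟫_ℂ
          = (⟪ξ, ξ⟫_ℂ).re := by
        rw [← inner_conj_symm]
        have := hre_eq y
        rw [RCLike.conj_re]; exact this
      rw [h5, h6]
      ring
    have := pow_eq_zero_iff (n := 2) (by norm_num) |>.mp hnorm
    rw [norm_eq_zero, sub_eq_zero] at this
    exact this
  intro η
  ext p
  obtain ⟨a, b⟩ := p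
  have hcol : ∀ d, ∑ c, V (a, b) (c, d) * ξ c = ξ a * (if b = d then 1 else 0) := by
    intro d
    have h1 := congrFun (congrArg WithLp.ofLp (key d)) (a, b)
    rw [mact_tens_single] at h1
    simpa [tens, EuclideanSpace.single_apply, eq_comm] using h1
  rw [mact_tens_apply]
  calc ∑ c, ∑ d, V (a, b) (c, d) * (ξ c * η d)
      = ∑ d, ∑ c, V (a, b) (c, d) * ξ c * η d := by
        rw [Finset.sum_comm]
        exact Finset.sum_congr rfl fun d _ => Finset.sum_congr rfl fun c _ => by ring
    _ = ∑ d, (ξ a * (if b = d then 1 else 0)) * η d := by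
        refine Finset.sum_congr rfl fun d _ => ?_
        rw [← Finset.sum_mul, hcol d]
    _ = ξ a * η b := by
        simp [ite_mul, mul_ite, Finset.sum_ite_eq, Finset.mem_univ]
    _ = tens ξ η (a, b) := rfl

end Fix

section Cofix
set_option linter.unusedSectionVars false

variable (V : Matrix (ι × ι) (ι × ι) ℂ)

lemma mact_tens_apply' (η ξ : EuclideanSpace ℂ ι) (a b : ι) :
    mact V (tens η ξ) (a, b) = ∑ c, ∑ d, V (a, b) (c, d) * (η c * ξ d) := by
  rw [mact_apply, Fintype.sum_prod_type]; rfl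

lemma mact_tens_single' (ξ : EuclideanSpace ℂ ι) (x a b : ι) :
    mact V (tens (EuclideanSpace.single x (1:ℂ)) ξ) (a, b)
      = ∑ d, V (a, b) (x, d) * ξ d := by
  rw [mact_tens_apply']
  simp [EuclideanSpace.single_apply, mul_ite, ite_mul, Finset.sum_ite_irrel,
    Finset.sum_const_zero, Finset.sum_ite_eq, Finset.sum_ite_eq', Finset.mem_univ]

lemma cofixed_eigen (ξ : EuclideanSpace ℂ ι)
    (h : ∀ η, mact V (tens η ξ) = tens η ξ) :
    mact (Bmat V) ξ = (Fintype.card ι : ℂ) • ξ := by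
  ext b
  have key : ∀ x, ∑ d, V (x, b) (x, d) * ξ d = ξ b := by
    intro x
    have h1 := congrFun (congrArg WithLp.ofLp (h (EuclideanSpace.single x 1))) (x, b)
    rw [mact_tens_single'] at h1
    simpa [tens, EuclideanSpace.single_apply] using h1
  show ∑ d, Bmat V b d * ξ d = ((Fintype.card ι : ℂ) • ξ) b
  calc ∑ d, Bmat V b d * ξ d = ∑ d, ∑ x, V (x, b) (x, d) * ξ d := by
        simp [Bmat, Finset.sum_mul]
    _ = ∑ x, ∑ d, V (x, b) (x, d) * ξ d := Finset.sum_comm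
    _ = ∑ _x : ι, ξ b := Finset.sum_congr rfl fun x _ => key x
    _ = (Fintype.card ι : ℂ) * ξ b := by
        simp [Finset.sum_const, nsmul_eq_mul]
    _ = ((Fintype.card ι : ℂ) • ξ) b := by simp [PiLp.smul_apply]

lemma eigen_cofixed (h2 : V.conjTranspose * V = 1) (ξ : EuclideanSpace ℂ ι)
    (h : mact (Bmat V) ξ = (Fintype.card ι : ℂ) • ξ) :
    ∀ η, mact V (tens η ξ) = tens η ξ := by
  have hB : ∀ b, ∑ x, ∑ d, V (x, b) (x, d) * ξ d = (Fintype.card ι : ℂ) * ξ b := by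
    intro b
    have h1 := congrFun (congrArg WithLp.ofLp h) b
    simp only [mact_apply, Bmat, PiLp.smul_apply, smul_eq_mul] at h1
    rw [← h1, Finset.sum_comm]
    exact Finset.sum_congr rfl fun d _ => (Finset.sum_mul _ _ _).symm
  have huu : ∀ x, ⟪(tens (EuclideanSpace.single x (1:ℂ)) ξ : EuclideanSpace ℂ (ι × ι)),
      tens (EuclideanSpace.single x 1) ξ⟫_ℂ = ⟪ξ, ξ⟫_ℂ := by
    intro x
    simp only [PiLp.inner_apply]
    simp [PiLp.inner_apply, RCLike.inner_apply, tens, EuclideanSpace.single_apply,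
      Fintype.sum_prod_type, apply_ite (starRingEnd ℂ), mul_ite, ite_mul,
      Finset.sum_ite_irrel, Finset.sum_const_zero,
      Finset.sum_ite_eq, Finset.sum_ite_eq', Finset.mem_univ]
    rw [Finset.sum_eq_single x (fun b _ hb => by simp [hb]) (by simp)]
    simp
  have e1 : ∀ x, ⟪(tens (EuclideanSpace.single x (1:ℂ)) ξ : EuclideanSpace ℂ (ι × ι)),
      mact V (tens (EuclideanSpace.single x 1) ξ)⟫_ℂ
      = ∑ b, (starRingEnd ℂ) (ξ b) * ∑ d, V (x, b) (x, d) * ξ d := by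
    intro x
    simp only [PiLp.inner_apply, RCLike.inner_apply, Fintype.sum_prod_type,
      mact_tens_single']
    simp [tens, EuclideanSpace.single_apply, apply_ite (starRingEnd ℂ), ite_mul,
      mul_ite, Finset.sum_ite_irrel, Finset.sum_const_zero,
      Finset.sum_ite_eq, Finset.sum_ite_eq', Finset.mem_univ]
    exact Finset.sum_congr rfl fun _ _ => mul_comm _ _
  have hsum : ∑ x, ⟪(tens (EuclideanSpace.single x (1:ℂ)) ξ : EuclideanSpace ℂ (ι × ι)),
      mact V (tens (EuclideanSpace.single x 1) ξ)⟫_ℂ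
      = (Fintype.card ι : ℂ) * ⟪ξ, ξ⟫_ℂ := by
    rw [Finset.sum_congr rfl fun x _ => e1 x, Finset.sum_comm]
    calc ∑ b, ∑ x, (starRingEnd ℂ) (ξ b) * ∑ d, V (x, b) (x, d) * ξ d
        = ∑ b, (starRingEnd ℂ) (ξ b) * ((Fintype.card ι : ℂ) * ξ b) := by
          refine Finset.sum_congr rfl fun b _ => ?_
          rw [← Finset.mul_sum, hB b]
      _ = (Fintype.card ι : ℂ) * ⟪ξ, ξ⟫_ℂ := by
          simp only [PiLp.inner_apply, RCLike.inner_apply, Finset.mul_sum]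
          exact Finset.sum_congr rfl fun b _ => by ring
  have key : ∀ x, mact V (tens (EuclideanSpace.single x (1:ℂ)) ξ)
      = tens (EuclideanSpace.single x 1) ξ := by
    have hre_le : ∀ x, (⟪(tens (EuclideanSpace.single x (1:ℂ)) ξ : EuclideanSpace ℂ (ι × ι)),
        mact V (tens (EuclideanSpace.single x 1) ξ)⟫_ℂ).re ≤ (⟪ξ, ξ⟫_ℂ).re := by
      intro x
      have cs := re_inner_le_norm (𝕜 := ℂ)
        (tens (EuclideanSpace.single x (1:ℂ)) ξ : EuclideanSpace ℂ (ι × ι))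
        (mact V (tens (EuclideanSpace.single x 1) ξ))
      rw [norm_mact V h2] at cs
      calc (⟪(tens (EuclideanSpace.single x (1:ℂ)) ξ : EuclideanSpace ℂ (ι × ι)),
          mact V (tens (EuclideanSpace.single x 1) ξ)⟫_ℂ).re
          ≤ ‖(tens (EuclideanSpace.single x (1:ℂ)) ξ : EuclideanSpace ℂ (ι × ι))‖ ^ 2 := by
            rw [sq]; exact cs
        _ = (⟪(tens (EuclideanSpace.single x (1:ℂ)) ξ : EuclideanSpace ℂ (ι × ι)),
            tens (EuclideanSpace.single x 1) ξ⟫_ℂ).re := by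
            rw [← inner_self_eq_norm_sq (𝕜 := ℂ)]; rfl
        _ = (⟪ξ, ξ⟫_ℂ).re := by rw [huu x]
    have hre_eq : ∀ x, (⟪(tens (EuclideanSpace.single x (1:ℂ)) ξ : EuclideanSpace ℂ (ι × ι)),
        mact V (tens (EuclideanSpace.single x 1) ξ)⟫_ℂ).re = (⟪ξ, ξ⟫_ℂ).re := by
      have hsre : ∑ x, (⟪(tens (EuclideanSpace.single x (1:ℂ)) ξ : EuclideanSpace ℂ (ι × ι)),
          mact V (tens (EuclideanSpace.single x 1) ξ)⟫_ℂ).re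
          = ∑ _x : ι, (⟪ξ, ξ⟫_ℂ).re := by
        rw [← Complex.re_sum, hsum]
        simp [Finset.sum_const, nsmul_eq_mul, Complex.ofReal_natCast]
      intro x
      exact (Finset.sum_eq_sum_iff_of_le fun i _ => hre_le i).mp hsre x
        (Finset.mem_univ x)
    intro x
    have hnorm : ‖mact V (tens (EuclideanSpace.single x (1:ℂ)) ξ)
        - tens (EuclideanSpace.single x 1) ξ‖ ^ 2 = 0 := by
      rw [norm_sub_sq (𝕜 := ℂ), norm_mact V h2]
      have h5 : ‖(tens (EuclideanSpace.single x (1:ℂ)) ξ : EuclideanSpace ℂ (ι × ι))‖ ^ 2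
          = (⟪ξ, ξ⟫_ℂ).re := by
        rw [← inner_self_eq_norm_sq (𝕜 := ℂ), huu x]; rfl
      have h6 : RCLike.re ⟪mact V (tens (EuclideanSpace.single x (1:ℂ)) ξ),
          (tens (EuclideanSpace.single x 1) ξ : EuclideanSpace ℂ (ι × ι))⟫_ℂ
          = (⟪ξ, ξ⟫_ℂ).re := by
        rw [← inner_conj_symm]
        have := hre_eq x
        rw [RCLike.conj_re]; exact this
      rw [h5, h6]
      ring
    have := pow_eq_zero_iff (n := 2) (by norm_num) |>.mp hnorm
    rw [norm_eq_zero, sub_eq_zero] at this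
    exact this
  intro η
  ext p
  obtain ⟨a, b⟩ := p
  have hcol : ∀ c, ∑ d, V (a, b) (c, d) * ξ d = (if a = c then 1 else 0) * ξ b := by
    intro c
    have h1 := congrFun (congrArg WithLp.ofLp (key c)) (a, b)
    rw [mact_tens_single'] at h1
    simpa [tens, EuclideanSpace.single_apply, eq_comm] using h1
  rw [mact_tens_apply']
  calc ∑ c, ∑ d, V (a, b) (c, d) * (η c * ξ d)
      = ∑ c, η c * ∑ d, V (a, b) (c, d) * ξ d := by
        refine Finset.sum_congr rfl fun c _ => ?_
        rw [Finset.mul_sum]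
        exact Finset.sum_congr rfl fun d _ => by ring
    _ = ∑ c, η c * ((if a = c then 1 else 0) * ξ b) := by
        refine Finset.sum_congr rfl fun c _ => ?_
        rw [hcol c]
    _ = η a * ξ b := by
        simp [ite_mul, mul_ite, Finset.sum_ite_eq, Finset.mem_univ]
    _ = tens η ξ (a, b) := rfl

end Cofix

/-- the space of fixed vectors and the space of cofixed vectors of a
multiplicative unitary on a finite-dimensional Hilbert space have equal dimension. -/
theorem fixed_dim_eq_cofixed_dim {ι : Type*} [Fintype ι] [DecidableEq ι] [Nonempty ι]
    (V : Matrix (ι × ι) (ι × ι) ℂ) (hV : IsMU V) :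
    Module.finrank ℂ ↥(⨅ η : EuclideanSpace ℂ ι,
        LinearMap.ker ((mact V).comp (tensR η) - tensR η)) =
    Module.finrank ℂ ↥(⨅ η : EuclideanSpace ℂ ι,
        LinearMap.ker ((mact V).comp (tensL η) - tensL η)) := by
  obtain ⟨h1, h2, hp⟩ := id hV
  have hn : (Fintype.card ι : ℂ) ≠ 0 := Nat.cast_ne_zero.mpr Fintype.card_ne_zero
  set nC : ℂ := (Fintype.card ι : ℂ) with hnC
  set PA : Matrix ι ι ℂ := nC⁻¹ • Amat V with hPA
  set PB : Matrix ι ι ℂ := nC⁻¹ • Bmat V with hPB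
  have hPA2 : PA * PA = PA := by
    rw [hPA, Matrix.smul_mul, Matrix.mul_smul, Amat_idem V hV, smul_smul, smul_smul, ← hnC]
    congr 1
    field_simp
  have hPB2 : PB * PB = PB := by
    rw [hPB, Matrix.smul_mul, Matrix.mul_smul, Bmat_idem V hV, smul_smul, smul_smul, ← hnC]
    congr 1
    field_simp
  have hfPA : ∀ v, mact PA (mact PA v) = mact PA v := fun v => by
    rw [← mact_mul_apply, hPA2]
  have hfPB : ∀ v, mact PB (mact PB v) = mact PB v := fun v => by
    rw [← mact_mul_apply, hPB2]
  have hA_of_PA : ∀ ξ, mact PA ξ = ξ → mact (Amat V) ξ = nC • ξ := fun ξ hfix => by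
    have h3 : nC • mact PA ξ = nC • ξ := by rw [hfix]
    rwa [hPA, mact_smul_apply, smul_smul, mul_inv_cancel₀ hn, one_smul] at h3
  have hPA_of_A : ∀ ξ, mact (Amat V) ξ = nC • ξ → mact PA ξ = ξ := fun ξ h => by
    rw [hPA, mact_smul_apply, h, smul_smul, inv_mul_cancel₀ hn, one_smul]
  have hB_of_PB : ∀ ξ, mact PB ξ = ξ → mact (Bmat V) ξ = nC • ξ := fun ξ hfix => by
    have h3 : nC • mact PB ξ = nC • ξ := by rw [hfix]
    rwa [hPB, mact_smul_apply, smul_smul, mul_inv_cancel₀ hn, one_smul] at h3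
  have hPB_of_B : ∀ ξ, mact (Bmat V) ξ = ξ → True := fun _ _ => trivial
  have hSfix : (⨅ η : EuclideanSpace ℂ ι,
      LinearMap.ker ((mact V).comp (tensR η) - tensR η))
      = LinearMap.range (mact PA) := by
    apply le_antisymm
    · intro ξ hξ
      have hfix : ∀ η, mact V (tens ξ η) = tens ξ η := by
        intro η
        have h3 := (Submodule.mem_iInf _).mp hξ η
        rw [LinearMap.mem_ker, LinearMap.sub_apply, LinearMap.comp_apply, sub_eq_zero] at h3
        exact h3
      exact ⟨ξ, hPA_of_A ξ (fixed_eigen V ξ hfix)⟩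
    · rintro ξ ⟨ζ, rfl⟩
      rw [Submodule.mem_iInf]
      intro η
      rw [LinearMap.mem_ker, LinearMap.sub_apply, LinearMap.comp_apply, sub_eq_zero]
      exact eigen_fixed V h2 (mact PA ζ) (hA_of_PA _ (hfPA ζ)) η
  have hScofix : (⨅ η : EuclideanSpace ℂ ι,
      LinearMap.ker ((mact V).comp (tensL η) - tensL η))
      = LinearMap.range (mact PB) := by
    apply le_antisymm
    · intro ξ hξ
      have hfix : ∀ η, mact V (tens η ξ) = tens η ξ := by
        intro η
        have h3 := (Submodule.mem_iInf _).mp hξ η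
        rw [LinearMap.mem_ker, LinearMap.sub_apply, LinearMap.comp_apply, sub_eq_zero] at h3
        exact h3
      refine ⟨ξ, ?_⟩
      rw [hPB, mact_smul_apply, cofixed_eigen V ξ hfix, smul_smul, inv_mul_cancel₀ hn,
        one_smul]
    · rintro ξ ⟨ζ, rfl⟩
      rw [Submodule.mem_iInf]
      intro η
      rw [LinearMap.mem_ker, LinearMap.sub_apply, LinearMap.comp_apply, sub_eq_zero]
      exact eigen_cofixed V h2 (mact PB ζ) (hB_of_PB _ (hfPB ζ)) η
  have hprojA : LinearMap.IsProj (LinearMap.range (mact PA)) (mact PA) :=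
    ⟨fun x => LinearMap.mem_range_self _ x, fun x hx => by
      obtain ⟨y, rfl⟩ := hx; exact hfPA y⟩
  have hprojB : LinearMap.IsProj (LinearMap.range (mact PB)) (mact PB) :=
    ⟨fun x => LinearMap.mem_range_self _ x, fun x hx => by
      obtain ⟨y, rfl⟩ := hx; exact hfPB y⟩
  have htrA : LinearMap.trace ℂ (EuclideanSpace ℂ ι) (mact PA) = nC⁻¹ * V.trace := by
    rw [hPA, trace_mact, Matrix.trace_smul, smul_eq_mul, trace_Amat]
  have htrB : LinearMap.trace ℂ (EuclideanSpace ℂ ι) (mact PB) = nC⁻¹ * V.trace := by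
    rw [hPB, trace_mact, Matrix.trace_smul, smul_eq_mul, trace_Bmat]
  have hcast : (Module.finrank ℂ ↥(LinearMap.range (mact PA)) : ℂ)
      = (Module.finrank ℂ ↥(LinearMap.range (mact PB)) : ℂ) := by
    rw [← hprojA.trace, ← hprojB.trace, htrA, htrB]
  rw [hSfix, hScofix]
  exact_mod_cast hcast

end MU
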